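/- Let X be a Banach space with an exponential dichotomy along an orbit: Green function G(n,k) with ‖G(n,k)‖ ≤ K(k) e^{-α|n−k|} for tempered K and α > 0, and a perturbation C(n) ∈ L(X) with ‖C(n)‖ ≤ ρ/K(n+1) for a constant ρ ≥ 0. Fix β ∈ (−α, α) and define, for f in the weighted space with sup_k K(k)e^{-βk}|f(k)| < ∞, the map Υ on ℓ^∞_{1,β}(ℤ) by (Υx)(n) = Σ_{k∈ℤ} G(n,k)( C(k−1)x(k−1) + f(k) ). Then Υ maps ℓ^∞_{1,β}(ℤ) into itself and is Lipschitz with constant ρ e^{-β} ( 1/(1−e^{-(α+β)}) + e^{-(α−β)}/(1−e^{-(α−β)}) ) with respect to the norm sup_n e^{-βn}|x(n)|. In particular, if this constant is < 1, Υ has a unique fixed point x, and x satisfies x(n+1) = (A(n)+C(n))x(n) + f(n+1) for all n ∈ ℤ. -/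

import Mathlib

open scoped BoundedContinuousFunction

lemma aux14_hasSum (α β : ℝ) (hab1 : 0 < α - β) (hab2 : 0 < α + β) (n : ℤ) :
    HasSum (fun k : ℤ => Real.exp (-α * |(n : ℝ) - (k : ℝ)| + β * ((k : ℝ) - (n : ℝ))))
      (1 / (1 - Real.exp (-(α + β))) + Real.exp (-(α - β)) / (1 - Real.exp (-(α - β)))) := by
  set a := Real.exp (-(α - β)) with ha_def
  set b := Real.exp (-(α + β)) with hb_def
  have ha0 : 0 < a := Real.exp_pos _
  have hb0 : 0 < b := Real.exp_pos _
  have ha1 : a < 1 := Real.exp_lt_one_iff.mpr (by linarith)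
  have hb1 : b < 1 := Real.exp_lt_one_iff.mpr (by linarith)
  set f : ℤ → ℝ := fun j => Real.exp (-α * |(j : ℝ)| + β * (j : ℝ)) with hf_def
  have hpos : HasSum (fun m : ℕ => f (m : ℤ)) (1 - a)⁻¹ := by
    have := hasSum_geometric_of_lt_one ha0.le ha1
    convert this using 2 with m
    simp only [hf_def, Int.cast_natCast, abs_of_nonneg (Nat.cast_nonneg' m : (0:ℝ) ≤ m)]
    rw [ha_def, ← Real.exp_nat_mul]
    congr 1; ring
  have hneg : HasSum (fun m : ℕ => f (-((m : ℤ) + 1))) (b * (1 - b)⁻¹) := by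
    have := (hasSum_geometric_of_lt_one hb0.le hb1).mul_left b
    convert this using 2 with m
    · rfl
    have hcast : ((-((m : ℤ) + 1) : ℤ) : ℝ) = -((m : ℝ) + 1) := by push_cast; ring
    simp only [hf_def, hcast]
    rw [abs_neg, abs_of_nonneg (by positivity : (0:ℝ) ≤ (m : ℝ) + 1)]
    rw [hb_def, ← Real.exp_nat_mul, ← Real.exp_add]
    congr 1; ring
  have hsum : HasSum f ((1 - a)⁻¹ + b * (1 - b)⁻¹) := hpos.of_nat_of_neg_add_one hneg
  have hval : (1 - a)⁻¹ + b * (1 - b)⁻¹ = 1 / (1 - b) + a / (1 - a) := by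
    have h1 : (1 : ℝ) - a ≠ 0 := by linarith
    have h2 : (1 : ℝ) - b ≠ 0 := by linarith
    field_simp
    ring
  rw [hval] at hsum
  have h2 := ((Equiv.subRight n).hasSum_iff).mpr hsum
  have hfun : (fun k : ℤ => Real.exp (-α * |(n : ℝ) - (k : ℝ)| + β * ((k : ℝ) - (n : ℝ))))
      = f ∘ (Equiv.subRight n) := by
    funext k
    simp only [hf_def, Function.comp, Equiv.subRight_apply]
    push_cast
    rw [abs_sub_comm]
  rw [hfun]
  exact h2

theorem stmt_14 {X : Type*} [NormedAddCommGroup X] [NormedSpace ℝ X] [CompleteSpace X]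
    (A Cop : ℤ → X →L[ℝ] X) (G : ℤ → ℤ → X →L[ℝ] X)
    (K : ℤ → ℝ) (α β ρ M : ℝ) (f : ℤ → X)
    (hK : ∀ n, 0 < K n) (hα : 0 < α) (hβ : |β| < α) (hρ : 0 ≤ ρ)
    (hG : ∀ n k : ℤ, ‖G n k‖ ≤ K k * Real.exp (-α * |(n : ℝ) - (k : ℝ)|))
    (hC : ∀ n : ℤ, ‖Cop n‖ ≤ ρ / K (n + 1))
    (hf : ∀ k : ℤ, K k * Real.exp (-β * (k : ℝ)) * ‖f k‖ ≤ M)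
    (hGreen : ∀ g : ℤ → X,
      (∃ C0 : ℝ, ∀ k : ℤ, K k * Real.exp (-β * (k : ℝ)) * ‖g k‖ ≤ C0) →
      ∀ n : ℤ, (∑' k : ℤ, G (n + 1) k (g k)) = A n (∑' k : ℤ, G n k (g k)) + g (n + 1))
    (Υ : (ℤ → X) → ℤ → X)
    (hΥ : ∀ (x : ℤ → X) (n : ℤ),
      Υ x n = ∑' k : ℤ, G n k (Cop (k - 1) (x (k - 1)) + f k)) :
    (∀ x : ℤ → X, (∃ C0 : ℝ, ∀ n : ℤ, Real.exp (-β * (n : ℝ)) * ‖x n‖ ≤ C0) →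
      ∃ C1 : ℝ, ∀ n : ℤ, Real.exp (-β * (n : ℝ)) * ‖Υ x n‖ ≤ C1) ∧
    (∀ x y : ℤ → X, ∀ D : ℝ,
      (∃ C0 : ℝ, ∀ n : ℤ, Real.exp (-β * (n : ℝ)) * ‖x n‖ ≤ C0) →
      (∃ C0 : ℝ, ∀ n : ℤ, Real.exp (-β * (n : ℝ)) * ‖y n‖ ≤ C0) →
      (∀ n : ℤ, Real.exp (-β * (n : ℝ)) * ‖x n - y n‖ ≤ D) →
      ∀ n : ℤ, Real.exp (-β * (n : ℝ)) * ‖Υ x n - Υ y n‖ ≤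
        ρ * Real.exp (-β) *
          (1 / (1 - Real.exp (-(α + β))) +
            Real.exp (-(α - β)) / (1 - Real.exp (-(α - β)))) * D) ∧
    (ρ * Real.exp (-β) *
        (1 / (1 - Real.exp (-(α + β))) +
          Real.exp (-(α - β)) / (1 - Real.exp (-(α - β)))) < 1 →
      ∃ x : ℤ → X,
        (∃ C1 : ℝ, ∀ n : ℤ, Real.exp (-β * (n : ℝ)) * ‖x n‖ ≤ C1) ∧
        (∀ n : ℤ, Υ x n = x n) ∧
        (∀ n : ℤ, x (n + 1) = A n (x n) + Cop n (x n) + f (n + 1)) ∧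
        (∀ y : ℤ → X, (∃ C1 : ℝ, ∀ n : ℤ, Real.exp (-β * (n : ℝ)) * ‖y n‖ ≤ C1) →
          (∀ n : ℤ, Υ y n = y n) → y = x)) := by
  classical
  obtain ⟨hβ1, hβ2⟩ := abs_lt.mp hβ
  have hab1 : 0 < α - β := by linarith
  have hab2 : 0 < α + β := by linarith
  set S := 1 / (1 - Real.exp (-(α + β))) + Real.exp (-(α - β)) / (1 - Real.exp (-(α - β)))
    with hS_def
  have ha1 : Real.exp (-(α - β)) < 1 := Real.exp_lt_one_iff.mpr (by linarith)
  have hb1 : Real.exp (-(α + β)) < 1 := Real.exp_lt_one_iff.mpr (by linarith)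
  have ha0 : (0:ℝ) < Real.exp (-(α - β)) := Real.exp_pos _
  have hb0 : (0:ℝ) < Real.exp (-(α + β)) := Real.exp_pos _
  have hS0 : 0 < S := by
    rw [hS_def]
    have h1 : (0:ℝ) < 1 - Real.exp (-(α + β)) := by linarith
    have h2 : (0:ℝ) < 1 - Real.exp (-(α - β)) := by linarith
    positivity
  have hM0 : 0 ≤ M :=
    le_trans (mul_nonneg (mul_nonneg (hK 0).le (Real.exp_pos _).le) (norm_nonneg _)) (hf 0)
  have hone : ∀ n : ℤ, Real.exp (-β * (n : ℝ)) * Real.exp (β * (n : ℝ)) = 1 := by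
    intro n
    rw [← Real.exp_add, show -β * (n : ℝ) + β * n = 0 by ring, Real.exp_zero]
  -- conversion of weighted bounds
  have conv1 : ∀ (u : ℤ → X) (c : ℝ), (∀ m : ℤ, Real.exp (-β * (m : ℝ)) * ‖u m‖ ≤ c) →
      ∀ m : ℤ, ‖u m‖ ≤ c * Real.exp (β * (m : ℝ)) := by
    intro u c hu m
    have h2 := mul_le_mul_of_nonneg_left (hu m) (Real.exp_pos (β * (m : ℝ))).le
    calc ‖u m‖ = Real.exp (β * m) * (Real.exp (-β * m) * ‖u m‖) := by
          rw [← mul_assoc, mul_comm (Real.exp (β * (m:ℝ))) (Real.exp (-β * (m:ℝ))), hone m,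
            one_mul]
      _ ≤ Real.exp (β * m) * c := h2
      _ = c * Real.exp (β * m) := mul_comm _ _
  have hw : ∀ k : ℤ, ‖f k‖ ≤ M * Real.exp (β * (k : ℝ)) / K k := by
    intro k
    have hKk := hK k
    rw [le_div_iff₀ hKk]
    have h2 := mul_le_mul_of_nonneg_left (hf k) (Real.exp_pos (β * (k : ℝ))).le
    have e : Real.exp (β * (k : ℝ)) * (K k * Real.exp (-β * (k:ℝ)) * ‖f k‖) = ‖f k‖ * K k := by
      have h3 := hone k
      linear_combination (K k * ‖f k‖) * h3
    calc ‖f k‖ * K k = Real.exp (β * (k:ℝ)) * (K k * Real.exp (-β * (k:ℝ)) * ‖f k‖) := e.symm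
      _ ≤ Real.exp (β * (k:ℝ)) * M := h2
      _ = M * Real.exp (β * (k:ℝ)) := mul_comm _ _
  -- key pointwise estimate
  have key : ∀ (z w : ℤ → X) (c Mw : ℝ),
      (∀ m : ℤ, ‖z m‖ ≤ c * Real.exp (β * (m : ℝ))) →
      (∀ k : ℤ, ‖w k‖ ≤ Mw * Real.exp (β * (k : ℝ)) / K k) →
      ∀ n k : ℤ, ‖G n k (Cop (k - 1) (z (k - 1)) + w k)‖ ≤
        (c * Real.exp (-β) * ρ + Mw) * Real.exp (β * (n : ℝ)) *
          Real.exp (-α * |(n : ℝ) - (k : ℝ)| + β * ((k : ℝ) - (n : ℝ))) := by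
    intro z w c Mw hz hwk n k
    have hKk := hK k
    have hCk : ‖Cop (k - 1)‖ ≤ ρ / K k := by
      have := hC (k - 1); rwa [sub_add_cancel] at this
    have hz' : ‖z (k - 1)‖ ≤ c * Real.exp (β * ((k : ℝ) - 1)) := by
      have := hz (k - 1); push_cast at this; exact this
    have h1 : ‖Cop (k - 1) (z (k - 1))‖ ≤ (ρ / K k) * (c * Real.exp (β * ((k : ℝ) - 1))) :=
      le_trans ((Cop (k - 1)).le_opNorm _)
        (mul_le_mul hCk hz' (norm_nonneg _) (div_nonneg hρ hKk.le))
    have hnorm : ‖Cop (k - 1) (z (k - 1)) + w k‖ ≤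
        (ρ / K k) * (c * Real.exp (β * ((k : ℝ) - 1))) + Mw * Real.exp (β * (k:ℝ)) / K k :=
      (norm_add_le _ _).trans (add_le_add h1 (hwk k))
    have e1 : Real.exp (β * ((k : ℝ) - 1)) = Real.exp (β * (k : ℝ)) * Real.exp (-β) := by
      rw [← Real.exp_add]; congr 1; ring
    have e2 : Real.exp (-α * |(n : ℝ) - (k : ℝ)| + β * ((k : ℝ) - (n : ℝ)))
        = Real.exp (-α * |(n : ℝ) - (k : ℝ)|) * Real.exp (β * (k : ℝ)) *
          (Real.exp (β * (n : ℝ)))⁻¹ := by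
      rw [← Real.exp_neg, ← Real.exp_add, ← Real.exp_add]; congr 1; ring
    calc ‖G n k (Cop (k - 1) (z (k - 1)) + w k)‖
        ≤ ‖G n k‖ * ‖Cop (k - 1) (z (k - 1)) + w k‖ := (G n k).le_opNorm _
      _ ≤ (K k * Real.exp (-α * |(n : ℝ) - (k : ℝ)|)) *
          ((ρ / K k) * (c * Real.exp (β * ((k : ℝ) - 1))) + Mw * Real.exp (β * (k:ℝ)) / K k) :=
          mul_le_mul (hG n k) hnorm (norm_nonneg _)
            (mul_nonneg hKk.le (Real.exp_pos _).le)
      _ = (c * Real.exp (-β) * ρ + Mw) * Real.exp (β * (n : ℝ)) *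
          Real.exp (-α * |(n : ℝ) - (k : ℝ)| + β * ((k : ℝ) - (n : ℝ))) := by
          rw [e1, e2]
          field_simp
  -- summability and tsum bound
  have keysum : ∀ (z w : ℤ → X) (c Mw : ℝ),
      (∀ m : ℤ, ‖z m‖ ≤ c * Real.exp (β * (m : ℝ))) →
      (∀ k : ℤ, ‖w k‖ ≤ Mw * Real.exp (β * (k : ℝ)) / K k) →
      ∀ n : ℤ,
        Summable (fun k : ℤ => G n k (Cop (k - 1) (z (k - 1)) + w k)) ∧
        ‖∑' k : ℤ, G n k (Cop (k - 1) (z (k - 1)) + w k)‖ ≤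
          (c * Real.exp (-β) * ρ + Mw) * Real.exp (β * (n : ℝ)) * S := by
    intro z w c Mw hz hwk n
    have hsum := (aux14_hasSum α β hab1 hab2 n).mul_left
      ((c * Real.exp (-β) * ρ + Mw) * Real.exp (β * (n : ℝ)))
    rw [← hS_def] at hsum
    constructor
    · exact Summable.of_norm_bounded hsum.summable (fun k => key z w c Mw hz hwk n k)
    · rw [show (c * Real.exp (-β) * ρ + Mw) * Real.exp (β * (n : ℝ)) * S
          = (c * Real.exp (-β) * ρ + Mw) * Real.exp (β * (n : ℝ)) * S from rfl]
      exact tsum_of_norm_bounded hsum (fun k => key z w c Mw hz hwk n k)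
  -- Part 1
  have part1 : ∀ x : ℤ → X, (∃ C0 : ℝ, ∀ n : ℤ, Real.exp (-β * (n : ℝ)) * ‖x n‖ ≤ C0) →
      ∃ C1 : ℝ, ∀ n : ℤ, Real.exp (-β * (n : ℝ)) * ‖Υ x n‖ ≤ C1 := by
    rintro x ⟨C0, hx⟩
    refine ⟨(C0 * Real.exp (-β) * ρ + M) * S, fun n => ?_⟩
    have hb := (keysum x f C0 M (conv1 x C0 hx) hw n).2
    rw [hΥ]
    have h2 := mul_le_mul_of_nonneg_left hb (Real.exp_pos (-β * (n : ℝ))).le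
    calc Real.exp (-β * (n:ℝ)) * ‖∑' k : ℤ, G n k (Cop (k - 1) (x (k - 1)) + f k)‖
        ≤ Real.exp (-β * (n:ℝ)) *
          ((C0 * Real.exp (-β) * ρ + M) * Real.exp (β * (n:ℝ)) * S) := h2
      _ = (C0 * Real.exp (-β) * ρ + M) * S := by
          linear_combination ((C0 * Real.exp (-β) * ρ + M) * S) * hone n
  -- Part 2
  have part2 : ∀ x y : ℤ → X, ∀ D : ℝ,
      (∃ C0 : ℝ, ∀ n : ℤ, Real.exp (-β * (n : ℝ)) * ‖x n‖ ≤ C0) →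
      (∃ C0 : ℝ, ∀ n : ℤ, Real.exp (-β * (n : ℝ)) * ‖y n‖ ≤ C0) →
      (∀ n : ℤ, Real.exp (-β * (n : ℝ)) * ‖x n - y n‖ ≤ D) →
      ∀ n : ℤ, Real.exp (-β * (n : ℝ)) * ‖Υ x n - Υ y n‖ ≤ ρ * Real.exp (-β) * S * D := by
    rintro x y D ⟨C0x, hx⟩ ⟨C0y, hy⟩ hD n
    have hz : ∀ m : ℤ, ‖x m - y m‖ ≤ D * Real.exp (β * (m : ℝ)) :=
      conv1 (fun m => x m - y m) D hD
    have hw0 : ∀ k : ℤ, ‖(fun _ : ℤ => (0:X)) k‖ ≤ 0 * Real.exp (β * (k : ℝ)) / K k := by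
      intro k; simp
    have hsx := (keysum x f C0x M (conv1 x C0x hx) hw n).1
    have hsy := (keysum y f C0y M (conv1 y C0y hy) hw n).1
    have hb := (keysum (fun m => x m - y m) (fun _ => (0:X)) D 0 hz hw0 n).2
    have heq : ∀ k : ℤ,
        G n k (Cop (k - 1) (x (k - 1)) + f k) - G n k (Cop (k - 1) (y (k - 1)) + f k)
          = G n k (Cop (k - 1) ((fun m => x m - y m) (k - 1)) + (fun _ : ℤ => (0:X)) k) := by
      intro k
      simp only [add_zero, map_add, map_sub]
      abel
    calc Real.exp (-β * (n:ℝ)) * ‖Υ x n - Υ y n‖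
        = Real.exp (-β * (n:ℝ)) *
          ‖∑' k : ℤ, G n k (Cop (k - 1) ((fun m => x m - y m) (k - 1)) + (fun _ : ℤ => (0:X)) k)‖
          := by rw [hΥ, hΥ, ← Summable.tsum_sub hsx hsy, tsum_congr heq]
      _ ≤ Real.exp (-β * (n:ℝ)) *
          ((D * Real.exp (-β) * ρ + 0) * Real.exp (β * (n:ℝ)) * S) :=
          mul_le_mul_of_nonneg_left hb (Real.exp_pos _).le
      _ = ρ * Real.exp (-β) * S * D := by
          linear_combination (ρ * Real.exp (-β) * S * D) * hone n
  refine ⟨part1, part2, ?_⟩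
  -- Part 3
  intro hL
  set L := ρ * Real.exp (-β) * S with hL_def
  have hL0 : 0 ≤ L := mul_nonneg (mul_nonneg hρ (Real.exp_pos _).le) hS0.le
  have hsmul : ∀ (n : ℤ) (w : X),
      Real.exp (-β * (n : ℝ)) * ‖Real.exp (β * (n : ℝ)) • w‖ = ‖w‖ := by
    intro n w
    rw [norm_smul, Real.norm_eq_abs, abs_of_pos (Real.exp_pos _), ← mul_assoc, hone n, one_mul]
  have hconv : ∀ u : ℤ →ᵇ X, ∃ C1 : ℝ, ∀ n : ℤ,
      Real.exp (-β * (n : ℝ)) * ‖Υ (fun m => Real.exp (β * (m : ℝ)) • u m) n‖ ≤ C1 := by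
    intro u
    refine part1 _ ⟨‖u‖, fun n => ?_⟩
    rw [hsmul]
    exact u.norm_coe_le_norm n
  set Φ : (ℤ →ᵇ X) → (ℤ →ᵇ X) := fun u =>
    BoundedContinuousFunction.ofNormedAddCommGroupDiscrete
      (fun n => Real.exp (-β * (n : ℝ)) • Υ (fun m => Real.exp (β * (m : ℝ)) • u m) n)
      (Classical.choose (hconv u))
      (fun n => by
        rw [norm_smul, Real.norm_eq_abs, abs_of_pos (Real.exp_pos _)]
        exact Classical.choose_spec (hconv u) n) with hΦ_def
  have hΦ : ∀ (u : ℤ →ᵇ X) (n : ℤ),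
      Φ u n = Real.exp (-β * (n : ℝ)) • Υ (fun m => Real.exp (β * (m : ℝ)) • u m) n :=
    fun u n => rfl
  have hbd : ∀ u : ℤ →ᵇ X, ∀ m : ℤ,
      Real.exp (-β * (m : ℝ)) * ‖Real.exp (β * (m : ℝ)) • u m‖ ≤ ‖u‖ := by
    intro u m; rw [hsmul]; exact u.norm_coe_le_norm m
  have hlip : ∀ u v : ℤ →ᵇ X, dist (Φ u) (Φ v) ≤ L * dist u v := by
    intro u v
    refine (BoundedContinuousFunction.dist_le (mul_nonneg hL0 dist_nonneg)).mpr fun n => ?_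
    have hd : ∀ m : ℤ, Real.exp (-β * (m : ℝ)) *
        ‖(fun m : ℤ => Real.exp (β * (m : ℝ)) • u m) m
          - (fun m : ℤ => Real.exp (β * (m : ℝ)) • v m) m‖
          ≤ dist u v := by
      intro m
      show Real.exp (-β * (m : ℝ)) *
        ‖Real.exp (β * (m : ℝ)) • u m - Real.exp (β * (m : ℝ)) • v m‖ ≤ dist u v
      rw [← smul_sub, hsmul, ← dist_eq_norm]
      exact BoundedContinuousFunction.dist_coe_le_dist m
    calc dist (Φ u n) (Φ v n)
        = Real.exp (-β * (n:ℝ)) * ‖Υ (fun m => Real.exp (β * (m : ℝ)) • u m) n -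
            Υ (fun m => Real.exp (β * (m : ℝ)) • v m) n‖ := by
          rw [dist_eq_norm, hΦ, hΦ, ← smul_sub, norm_smul, Real.norm_eq_abs,
            abs_of_pos (Real.exp_pos _)]
      _ ≤ L * dist u v := by
          rw [hL_def]
          exact part2 _ _ (dist u v) ⟨‖u‖, hbd u⟩ ⟨‖v‖, hbd v⟩ hd n
  have hlipw : LipschitzWith (Real.toNNReal L) Φ :=
    LipschitzWith.of_dist_le_mul (fun u v => by
      rw [Real.coe_toNNReal L hL0]; exact hlip u v)
  have hK1 : Real.toNNReal L < 1 := by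
    have : Real.toNNReal L < Real.toNNReal 1 :=
      (Real.toNNReal_lt_toNNReal_iff_of_nonneg hL0).mpr hL
    rwa [Real.toNNReal_one] at this
  have hcontr : ContractingWith (Real.toNNReal L) Φ := ⟨hK1, hlipw⟩
  haveI : Nonempty (ℤ →ᵇ X) := ⟨0⟩
  set u : ℤ →ᵇ X := ContractingWith.fixedPoint Φ hcontr with hu_def
  have hufix : Φ u = u := hcontr.fixedPoint_isFixedPt
  set x : ℤ → X := fun m => Real.exp (β * (m : ℝ)) • u m with hx_def
  have hxfix : ∀ n : ℤ, Υ x n = x n := by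
    intro n
    have h1 : Φ u n = u n := by rw [hufix]
    rw [hΦ] at h1
    have h2 : x n = Real.exp (β * (n : ℝ)) • (Real.exp (-β * (n : ℝ)) • Υ x n) := by
      rw [hx_def]; exact congrArg _ h1.symm
    rw [h2, smul_smul, mul_comm, hone n, one_smul]
  have hxbd : ∀ n : ℤ, Real.exp (-β * (n : ℝ)) * ‖x n‖ ≤ ‖u‖ := hbd u
  -- the difference equation
  have hgbd : ∃ C0 : ℝ, ∀ k : ℤ,
      K k * Real.exp (-β * (k : ℝ)) * ‖Cop (k - 1) (x (k - 1)) + f k‖ ≤ C0 := by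
    refine ⟨ρ * Real.exp (-β) * ‖u‖ + M, fun k => ?_⟩
    have hKk := hK k
    have hKe : (0:ℝ) ≤ K k * Real.exp (-β * (k : ℝ)) :=
      mul_nonneg hKk.le (Real.exp_pos _).le
    have h1 : ‖x (k - 1)‖ ≤ Real.exp (β * ((k : ℝ) - 1)) * ‖u‖ := by
      have : ‖x (k - 1)‖ = Real.exp (β * (((k - 1 : ℤ)) : ℝ)) * ‖u (k - 1)‖ := by
        rw [hx_def, norm_smul, Real.norm_eq_abs, abs_of_pos (Real.exp_pos _)]
      rw [this]
      push_cast
      exact mul_le_mul_of_nonneg_left (u.norm_coe_le_norm (k - 1)) (Real.exp_pos _).le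
    have h2 : ‖Cop (k - 1)‖ ≤ ρ / K k := by
      have := hC (k - 1); rwa [sub_add_cancel] at this
    have e1 : Real.exp (β * ((k : ℝ) - 1)) = Real.exp (β * (k : ℝ)) * Real.exp (-β) := by
      rw [← Real.exp_add]; congr 1; ring
    calc K k * Real.exp (-β * (k:ℝ)) * ‖Cop (k - 1) (x (k - 1)) + f k‖
        ≤ K k * Real.exp (-β * (k:ℝ)) * (‖Cop (k - 1)‖ * ‖x (k - 1)‖ + ‖f k‖) :=
          mul_le_mul_of_nonneg_left
            ((norm_add_le _ _).trans (add_le_add ((Cop (k - 1)).le_opNorm _) le_rfl)) hKe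
      _ ≤ K k * Real.exp (-β * (k:ℝ)) *
          ((ρ / K k) * (Real.exp (β * ((k:ℝ) - 1)) * ‖u‖) + ‖f k‖) :=
          mul_le_mul_of_nonneg_left
            (add_le_add (mul_le_mul h2 h1 (norm_nonneg _) (div_nonneg hρ hKk.le)) le_rfl) hKe
      _ = ρ * Real.exp (-β) * ‖u‖ * (Real.exp (-β * (k:ℝ)) * Real.exp (β * (k:ℝ)))
          + K k * Real.exp (-β * (k:ℝ)) * ‖f k‖ := by
          rw [e1]; field_simp
      _ ≤ ρ * Real.exp (-β) * ‖u‖ + M := by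
          rw [hone k, mul_one]
          exact add_le_add le_rfl (hf k)
  have heqn : ∀ n : ℤ, x (n + 1) = A n (x n) + Cop n (x n) + f (n + 1) := by
    intro n
    have hx1 := hGreen (fun k => Cop (k - 1) (x (k - 1)) + f k) hgbd n
    rw [← hΥ x (n + 1), ← hΥ x n] at hx1
    rw [hxfix (n + 1), hxfix n] at hx1
    rw [hx1, show n + 1 - 1 = n from by ring, ← add_assoc]
  refine ⟨x, ⟨‖u‖, hxbd⟩, hxfix, heqn, ?_⟩
  -- uniqueness
  rintro y ⟨C1y, hy⟩ hyfix
  set v : ℤ →ᵇ X := BoundedContinuousFunction.ofNormedAddCommGroupDiscrete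
    (fun n => Real.exp (-β * (n : ℝ)) • y n) C1y (fun n => by
      rw [norm_smul, Real.norm_eq_abs, abs_of_pos (Real.exp_pos _)]
      exact hy n) with hv_def
  have hyv : (fun m : ℤ => Real.exp (β * (m : ℝ)) • v m) = y := by
    funext m
    show Real.exp (β * (m : ℝ)) • (Real.exp (-β * (m : ℝ)) • y m) = y m
    rw [smul_smul, mul_comm, hone m, one_smul]
  have hvfix : Function.IsFixedPt Φ v := by
    ext n
    show Real.exp (-β * (n : ℝ)) • Υ (fun m => Real.exp (β * (m : ℝ)) • v m) n
      = Real.exp (-β * (n : ℝ)) • y n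
    rw [hyv, hyfix n]
  have hvu : v = u := hcontr.fixedPoint_unique hvfix
  funext m
  rw [← hyv, hvu, hx_def]
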